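/- Bad-event estimate for the Feynman–Kac semigroup along the coupled chain: Assume hypothesis (C) with constants q ∈ [0,1), C > 0, let V : X → ℝ be continuous, and fix x, x' ∈ X. Then for every continuous f : X → ℝ, every n ≥ 1 and every 0 ≤ k ≤ n−1, |E[1_{C_k}·f(x_n)·exp(V(x_1)+⋯+V(x_n))]| ≤ C·e^{sup V}·‖f‖_∞·‖Q_{n−k−1}^V 1‖_∞·‖Q_k^V 1‖_∞·q^k·d(x,x'), where C_k = (∩_{j=0}^{k−1} A_j) ∩ A_k^c with A_j = {ω : d(x_{j+1}(ω), x_{j+1}'(ω)) ≤ q·d(x_j(ω), x_j'(ω))}. -/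

import Mathlib

open MeasureTheory Filter Topology
open scoped ENNReal NNReal

noncomputable def FK {X : Type*} [MeasurableSpace X] (κ : X → Measure X) (V f : X → ℝ) (x : X) : ℝ :=
  ∫ y, Real.exp (V y) * f y ∂(κ x)

noncomputable def FKiter {X : Type*} [MeasurableSpace X] (κ : X → Measure X) (V : X → ℝ) :
    ℕ → (X → ℝ) → X → ℝ
  | 0 => fun f => f
  | n + 1 => fun f => FK κ V (FKiter κ V n f)

noncomputable def supNorm {X : Type*} (f : X → ℝ) : ℝ := ⨆ x, |f x|

noncomputable def lipConst {X : Type*} [MetricSpace X] (f : X → ℝ) : ℝ :=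
  sSup {c | ∃ x y, x ≠ y ∧ c = |f x - f y| / dist x y}

noncomputable def lipNorm {X : Type*} [MetricSpace X] (f : X → ℝ) : ℝ := supNorm f + lipConst f

/-- The coupled chain `(x_k, x_k')` driven by the maps `R, R'` and the noise sequence `ω`. -/
def chain {X Ω₀ : Type*} (R R' : X → X → Ω₀ → X) (x x' : X) : ℕ → (ℕ → Ω₀) → X × X
  | 0 => fun _ => (x, x')
  | k + 1 => fun ω =>
      (R (chain R R' x x' k ω).1 (chain R R' x x' k ω).2 (ω k),
       R' (chain R R' x x' k ω).1 (chain R R' x x' k ω).2 (ω k))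

/-- The squeezing event `A_j` for the coupled chain. -/
def eventA {X Ω₀ : Type*} [MetricSpace X] (R R' : X → X → Ω₀ → X) (x x' : X) (q : ℝ)
    (j : ℕ) : Set (ℕ → Ω₀) :=
  {ω | dist (chain R R' x x' (j + 1) ω).1 (chain R R' x x' (j + 1) ω).2
        ≤ q * dist (chain R R' x x' j ω).1 (chain R R' x x' j ω).2}

/-- The good event `B_k = ∩_{j<k} A_j`. -/
def eventB {X Ω₀ : Type*} [MetricSpace X] (R R' : X → X → Ω₀ → X) (x x' : X) (q : ℝ)
    (k : ℕ) : Set (ℕ → Ω₀) :=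
  ⋂ j ∈ Finset.range k, eventA R R' x x' q j

/-- The bad event `C_k = B_k ∩ A_kᶜ`. -/
def eventC {X Ω₀ : Type*} [MetricSpace X] (R R' : X → X → Ω₀ → X) (x x' : X) (q : ℝ)
    (k : ℕ) : Set (ℕ → Ω₀) :=
  eventB R R' x x' q k ∩ (eventA R R' x x' q k)ᶜ

section Helpers

lemma my_integrable_of_bdd {α : Type*} [MeasurableSpace α] {μ : Measure α} [IsFiniteMeasure μ]
    {g : α → ℝ} (hm : AEStronglyMeasurable g μ) {c : ℝ} (h : ∀ a, |g a| ≤ c) :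
    Integrable g μ :=
  ⟨hm, HasFiniteIntegral.of_bounded (C := c) (ae_of_all _ (by simpa [Real.norm_eq_abs] using h))⟩

variable {X : Type*} [MetricSpace X] [CompactSpace X]

lemma le_supNorm {g : X → ℝ} (hg : Continuous g) (z : X) : |g z| ≤ supNorm g := by
  have hb : BddAbove (Set.range fun z => |g z|) := by
    have := (isCompact_univ (X := X)).bddAbove_image (hg.abs.continuousOn)
    simpa [Set.image_univ] using this
  exact le_ciSup hb z

lemma self_le_supNorm {g : X → ℝ} (hg : Continuous g) (z : X) : g z ≤ supNorm g :=
  (le_abs_self _).trans (le_supNorm hg z)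

lemma supNorm_nonneg [Nonempty X] {g : X → ℝ} (hg : Continuous g) : 0 ≤ supNorm g :=
  (abs_nonneg _).trans (le_supNorm hg (Classical.arbitrary X))

lemma cont_integrable [Nonempty X] [MeasurableSpace X] [BorelSpace X] {g : X → ℝ}
    (hg : Continuous g) (μ : Measure X) [IsFiniteMeasure μ] : Integrable g μ :=
  my_integrable_of_bdd hg.measurable.aestronglyMeasurable (le_supNorm hg)

end Helpers

section ChainLemmas

variable {X Ω₀ : Type*} (R R' : X → X → Ω₀ → X)

lemma chain_shift (x x' : X) (k : ℕ) (ω : ℕ → Ω₀) :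
    chain R R' x x' (k + 1) ω
      = chain R R' (R x x' (ω 0)) (R' x x' (ω 0)) k (fun i => ω (i + 1)) := by
  induction k with
  | zero => simp [chain]
  | succ k ih =>
      show (R (chain R R' x x' (k+1) ω).1 (chain R R' x x' (k+1) ω).2 (ω (k + 1)),
            R' (chain R R' x x' (k+1) ω).1 (chain R R' x x' (k+1) ω).2 (ω (k + 1)))
          = chain R R' (R x x' (ω 0)) (R' x x' (ω 0)) (k + 1) fun i => ω (i + 1)
      rw [ih]; rfl

lemma chain_congr (x x' : X) (k : ℕ) {ω ω' : ℕ → Ω₀} (h : ∀ i < k, ω i = ω' i) :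
    chain R R' x x' k ω = chain R R' x x' k ω' := by
  induction k with
  | zero => rfl
  | succ k ih =>
      simp only [chain, ih (fun i hi => h i (Nat.lt_succ_of_lt hi)), h k (Nat.lt_succ_self k)]

variable [MeasurableSpace X] [MeasurableSpace Ω₀]

lemma chain_measurable_pair (hR : Measurable fun p : (X × X) × Ω₀ => R p.1.1 p.1.2 p.2)
    (hR' : Measurable fun p : (X × X) × Ω₀ => R' p.1.1 p.1.2 p.2) (k : ℕ) :
    Measurable fun p : (X × X) × (ℕ → Ω₀) => chain R R' p.1.1 p.1.2 k p.2 := by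
  induction k with
  | zero => exact measurable_fst
  | succ k ih =>
      have h1 : Measurable fun p : (X × X) × (ℕ → Ω₀) =>
          (chain R R' p.1.1 p.1.2 k p.2, p.2 k) :=
        ih.prodMk ((measurable_pi_apply k).comp measurable_snd)
      exact (hR.comp h1).prodMk (hR'.comp h1)

lemma chain_measurable (hR : Measurable fun p : (X × X) × Ω₀ => R p.1.1 p.1.2 p.2)
    (hR' : Measurable fun p : (X × X) × Ω₀ => R' p.1.1 p.1.2 p.2) (x x' : X) (k : ℕ) :
    Measurable fun ω : ℕ → Ω₀ => chain R R' x x' k ω := by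
  have h0 : Measurable fun ω : ℕ → Ω₀ => (((x, x'), ω) : (X × X) × (ℕ → Ω₀)) :=
    measurable_const.prodMk measurable_id
  exact (chain_measurable_pair R R' hR hR' k).comp h0

omit [MeasurableSpace X] [MeasurableSpace Ω₀] in
lemma sum_V_shift (V : X → ℝ) (x x' : X) (m : ℕ) (ω : ℕ → Ω₀) :
    ∑ i ∈ Finset.Icc 1 (m + 1), V (chain R R' x x' i ω).1
      = V (R x x' (ω 0)) +
        ∑ i ∈ Finset.Icc 1 m,
          V (chain R R' (R x x' (ω 0)) (R' x x' (ω 0)) i (fun j => ω (j + 1))).1 := by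
  induction m with
  | zero => simp [chain]
  | succ m ih =>
      rw [Finset.sum_Icc_succ_top (by omega : 1 ≤ m + 1 + 1), ih,
        Finset.sum_Icc_succ_top (by omega : 1 ≤ m + 1), chain_shift]
      ring

end ChainLemmas

section EventLemmas

variable {X Ω₀ : Type*} [MetricSpace X] (R R' : X → X → Ω₀ → X) (q : ℝ)

lemma mem_eventA_zero (x x' : X) (ω : ℕ → Ω₀) :
    ω ∈ eventA R R' x x' q 0 ↔ dist (R x x' (ω 0)) (R' x x' (ω 0)) ≤ q * dist x x' := by
  simp [eventA, chain]

lemma mem_eventA_succ (x x' : X) (j : ℕ) (ω : ℕ → Ω₀) :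
    ω ∈ eventA R R' x x' q (j + 1) ↔
      (fun i => ω (i + 1)) ∈ eventA R R' (R x x' (ω 0)) (R' x x' (ω 0)) q j := by
  simp only [eventA, Set.mem_setOf_eq, chain_shift R R' x x' (j + 1) ω,
    chain_shift R R' x x' j ω]

lemma mem_eventB (x x' : X) (k : ℕ) (ω : ℕ → Ω₀) :
    ω ∈ eventB R R' x x' q k ↔ ∀ j < k, ω ∈ eventA R R' x x' q j := by
  simp [eventB]

lemma mem_eventC_zero (x x' : X) (ω : ℕ → Ω₀) :
    ω ∈ eventC R R' x x' q 0 ↔ ¬ dist (R x x' (ω 0)) (R' x x' (ω 0)) ≤ q * dist x x' := by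
  simp [eventC, mem_eventB, mem_eventA_zero]

lemma mem_eventC_succ (x x' : X) (k : ℕ) (ω : ℕ → Ω₀) :
    ω ∈ eventC R R' x x' q (k + 1) ↔
      dist (R x x' (ω 0)) (R' x x' (ω 0)) ≤ q * dist x x' ∧
        (fun i => ω (i + 1)) ∈ eventC R R' (R x x' (ω 0)) (R' x x' (ω 0)) q k := by
  simp only [eventC, Set.mem_inter_iff, Set.mem_compl_iff, mem_eventB,
    mem_eventA_succ R R' q x x' k ω]
  constructor
  · rintro ⟨hB, hA⟩
    refine ⟨(mem_eventA_zero R R' q x x' ω).1 (hB 0 (Nat.succ_pos k)), ?_, hA⟩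
    intro j hj
    exact (mem_eventA_succ R R' q x x' j ω).1 (hB (j + 1) (by omega))
  · rintro ⟨h0, hB, hA⟩
    refine ⟨?_, hA⟩
    intro j hj
    cases j with
    | zero => exact (mem_eventA_zero R R' q x x' ω).2 h0
    | succ j => exact (mem_eventA_succ R R' q x x' j ω).2 (hB j (by omega))

lemma mem_eventA_congr (x x' : X) (j : ℕ) {ω ω' : ℕ → Ω₀} (h : ∀ i < j + 1, ω i = ω' i) :
    ω ∈ eventA R R' x x' q j ↔ ω' ∈ eventA R R' x x' q j := by
  simp only [eventA, Set.mem_setOf_eq, chain_congr R R' x x' (j + 1) h,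
    chain_congr R R' x x' j (fun i hi => h i (by omega))]

lemma mem_eventC_congr (x x' : X) (k : ℕ) {ω ω' : ℕ → Ω₀} (h : ∀ i < k + 1, ω i = ω' i) :
    ω ∈ eventC R R' x x' q k ↔ ω' ∈ eventC R R' x x' q k := by
  simp only [eventC, Set.mem_inter_iff, Set.mem_compl_iff, mem_eventB,
    mem_eventA_congr R R' q x x' k h]
  constructor
  · rintro ⟨hB, hA⟩
    exact ⟨fun j hj => (mem_eventA_congr R R' q x x' j (fun i hi => h i (by omega))).1
      (hB j hj), hA⟩
  · rintro ⟨hB, hA⟩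
    exact ⟨fun j hj => (mem_eventA_congr R R' q x x' j (fun i hi => h i (by omega))).2
      (hB j hj), hA⟩

variable [MeasurableSpace X] [BorelSpace X] [CompactSpace X] [MeasurableSpace Ω₀]
variable (hR : Measurable fun p : (X × X) × Ω₀ => R p.1.1 p.1.2 p.2)
variable (hR' : Measurable fun p : (X × X) × Ω₀ => R' p.1.1 p.1.2 p.2)

include hR hR' in
lemma measurableSet_eventA (x x' : X) (j : ℕ) : MeasurableSet (eventA R R' x x' q j) := by
  have h1 := chain_measurable R R' hR hR' x x' (j + 1)
  have h2 := chain_measurable R R' hR hR' x x' j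
  exact measurableSet_le ((h1.fst).dist (h1.snd)) (measurable_const.mul ((h2.fst).dist (h2.snd)))

include hR hR' in
lemma measurableSet_eventC (x x' : X) (k : ℕ) : MeasurableSet (eventC R R' x x' q k) := by
  refine MeasurableSet.inter ?_ (measurableSet_eventA R R' q hR hR' x x' k).compl
  exact MeasurableSet.biInter (Set.to_countable _)
    (fun j _ => measurableSet_eventA R R' q hR hR' x x' j)

include hR hR' in
lemma measurableSet_eventC_prod (x x' : X) (k : ℕ) :
    MeasurableSet {p : Ω₀ × (ℕ → Ω₀) |
      p.2 ∈ eventC R R' (R x x' p.1) (R' x x' p.1) q k} := by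
  have hstart : Measurable fun p : Ω₀ × (ℕ → Ω₀) =>
      (((R x x' p.1, R' x x' p.1), p.2) : (X × X) × (ℕ → Ω₀)) := by
    have hpair : Measurable fun a : Ω₀ => (((x, x'), a) : (X × X) × Ω₀) :=
      measurable_const.prodMk measurable_id
    have hx : Measurable fun a : Ω₀ => R x x' a := hR.comp hpair
    have hx' : Measurable fun a : Ω₀ => R' x x' a := hR'.comp hpair
    exact ((hx.comp measurable_fst).prodMk (hx'.comp measurable_fst)).prodMk measurable_snd
  have hA : ∀ j : ℕ, MeasurableSet {p : Ω₀ × (ℕ → Ω₀) |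
      p.2 ∈ eventA R R' (R x x' p.1) (R' x x' p.1) q j} := by
    intro j
    have h1 := (chain_measurable_pair R R' hR hR' (j + 1)).comp hstart
    have h2 := (chain_measurable_pair R R' hR hR' j).comp hstart
    exact measurableSet_le ((h1.fst).dist (h1.snd)) (measurable_const.mul ((h2.fst).dist (h2.snd)))
  have : {p : Ω₀ × (ℕ → Ω₀) | p.2 ∈ eventC R R' (R x x' p.1) (R' x x' p.1) q k}
      = (⋂ j ∈ Finset.range k, {p : Ω₀ × (ℕ → Ω₀) |
          p.2 ∈ eventA R R' (R x x' p.1) (R' x x' p.1) q j})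
        ∩ {p : Ω₀ × (ℕ → Ω₀) | p.2 ∈ eventA R R' (R x x' p.1) (R' x x' p.1) q k}ᶜ := by
    ext p
    simp [eventC, eventB]
  rw [this]
  exact MeasurableSet.inter
    (MeasurableSet.biInter (Set.to_countable _) (fun j _ => hA j)) (hA k).compl

end EventLemmas

section FKLemmas

variable {X : Type*} [MetricSpace X] [CompactSpace X] [MeasurableSpace X] [BorelSpace X]
variable (κ : X → Measure X) (hκprob : ∀ x, IsProbabilityMeasure (κ x))
variable (hFeller : ∀ f : X → ℝ, Continuous f → Continuous fun x => ∫ y, f y ∂(κ x))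
variable (V : X → ℝ) (hV : Continuous V)

include hFeller hV in
lemma FK_cont {g : X → ℝ} (hg : Continuous g) : Continuous (FK κ V g) :=
  hFeller (fun y => Real.exp (V y) * g y) ((Real.continuous_exp.comp hV).mul hg)

include hFeller hV in
lemma FKiter_cont (m : ℕ) {g : X → ℝ} (hg : Continuous g) : Continuous (FKiter κ V m g) := by
  induction m with
  | zero => exact hg
  | succ m ih => exact FK_cont κ hFeller V hV ih

lemma FK_nonneg {g : X → ℝ} (hg : ∀ z, 0 ≤ g z) (z : X) : 0 ≤ FK κ V g z :=
  integral_nonneg fun y => mul_nonneg (Real.exp_pos _).le (hg y)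

lemma FKiter_one_nonneg (m : ℕ) (z : X) : 0 ≤ FKiter κ V m (1 : X → ℝ) z := by
  induction m generalizing z with
  | zero => exact zero_le_one
  | succ m ih => exact FK_nonneg κ V (fun y => ih y) z

include hκprob hFeller hV in
lemma abs_FKiter_le [Nonempty X] {f : X → ℝ} (hf : Continuous f) (m : ℕ) (z : X) :
    |FKiter κ V m f z| ≤ supNorm f * FKiter κ V m (1 : X → ℝ) z := by
  induction m generalizing z with
  | zero => simpa [FKiter] using le_supNorm hf z
  | succ m ih =>
      have hcont : Continuous (FKiter κ V m f) := FKiter_cont κ hFeller V hV m hf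
      have hcont1 : Continuous (FKiter κ V m (1 : X → ℝ)) :=
        FKiter_cont κ hFeller V hV m continuous_const
      have h1 : |FK κ V (FKiter κ V m f) z| ≤ ∫ y, Real.exp (V y) * |FKiter κ V m f y| ∂(κ z) := by
        haveI := hκprob z
        simpa [FK, Real.norm_eq_abs, abs_mul, abs_of_pos (Real.exp_pos _)] using
          norm_integral_le_integral_norm (fun y => Real.exp (V y) * FKiter κ V m f y) (μ := κ z)
      refine h1.trans ?_
      have h2 : ∀ y, Real.exp (V y) * |FKiter κ V m f y|
          ≤ Real.exp (V y) * (supNorm f * FKiter κ V m (1 : X → ℝ) y) := by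
        intro y
        exact mul_le_mul_of_nonneg_left (ih y) (Real.exp_pos _).le
      haveI := hκprob z
      have hint2 : Integrable (fun y => Real.exp (V y) *
          (supNorm f * FKiter κ V m (1 : X → ℝ) y)) (κ z) :=
        cont_integrable ((Real.continuous_exp.comp hV).mul (continuous_const.mul hcont1)) (κ z)
      have h3 := integral_mono_of_nonneg
        (ae_of_all _ (fun y => mul_nonneg (Real.exp_pos (V y)).le (abs_nonneg _)))
        hint2 (ae_of_all _ h2)
      refine h3.trans ?_
      have : ∫ y, Real.exp (V y) * (supNorm f * FKiter κ V m (1 : X → ℝ) y) ∂(κ z)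
          = supNorm f * ∫ y, Real.exp (V y) * FKiter κ V m (1 : X → ℝ) y ∂(κ z) := by
        rw [← integral_const_mul]
        congr 1; funext y; ring
      rw [this]
      rfl

end FKLemmas

section StepIntegral

variable {Ω₀ : Type*} [MeasurableSpace Ω₀]

lemma nonempty_of_prob (P₀ : Measure Ω₀) [IsProbabilityMeasure P₀] : Nonempty Ω₀ := by
  by_contra h
  rw [not_nonempty_iff] at h
  have h1 : P₀ Set.univ = 1 := measure_univ
  rw [Set.univ_eq_empty_iff.mpr h, measure_empty] at h1
  exact zero_ne_one h1

/-- Peeling off the first coordinate of the infinite product measure, for integrands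
depending on finitely many coordinates. -/
lemma step_integral (P₀ : Measure Ω₀) [IsProbabilityMeasure P₀]
    (P : Measure (ℕ → Ω₀)) [IsProbabilityMeasure P]
    (hP : ∀ n : ℕ, Measure.map (fun ω (i : Fin n) => ω i) P = Measure.pi fun _ : Fin n => P₀)
    (m : ℕ) (H : Ω₀ → (ℕ → Ω₀) → ℝ)
    (hHm : Measurable fun p : Ω₀ × (ℕ → Ω₀) => H p.1 p.2)
    (c : ℝ) (hc : ∀ a ω, |H a ω| ≤ c)
    (hdep : ∀ a (ω ω' : ℕ → Ω₀), (∀ i < m, ω i = ω' i) → H a ω = H a ω') :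
    ∫ ω, H (ω 0) (fun i => ω (i + 1)) ∂P = ∫ a, ∫ ω, H a ω ∂P ∂P₀ := by
  haveI : Nonempty Ω₀ := nonempty_of_prob P₀
  set a₀ : Ω₀ := Classical.arbitrary Ω₀
  -- extension of finite words by junk
  set ext : (Fin m → Ω₀) → (ℕ → Ω₀) := fun u i => if h : i < m then u ⟨i, h⟩ else a₀ with hext
  have hextm : Measurable ext := by
    refine measurable_pi_lambda _ (fun i => ?_)
    by_cases h : i < m
    · simpa [ext, h] using measurable_pi_apply (⟨i, h⟩ : Fin m)
    · simpa [ext, h] using measurable_const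
  -- restriction maps
  have hresm : ∀ n : ℕ, Measurable fun (ω : ℕ → Ω₀) (i : Fin n) => ω i := fun n =>
    measurable_pi_lambda _ (fun i => measurable_pi_apply (i : ℕ))
  -- inner identity: for every a, ∫ ω, H a ω ∂P = ∫ u, H a (ext u) ∂pi
  have hinner : ∀ a : Ω₀, ∫ ω, H a ω ∂P
      = ∫ u, H a (ext u) ∂(Measure.pi fun _ : Fin m => P₀) := by
    intro a
    have hHam : Measurable fun ω => H a ω := hHm.comp (measurable_const.prodMk measurable_id)
    have hsm : AEStronglyMeasurable (fun u : Fin m → Ω₀ => H a (ext u))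
        (Measure.map (fun (ω : ℕ → Ω₀) (i : Fin m) => ω i) P) :=
      (hHam.comp hextm).aestronglyMeasurable
    calc ∫ ω, H a ω ∂P
        = ∫ ω, (fun u : Fin m → Ω₀ => H a (ext u)) (fun i : Fin m => ω i) ∂P := by
          refine integral_congr_ae (ae_of_all _ (fun ω => ?_))
          refine hdep a ω _ (fun i hi => ?_)
          simp [ext, hi]
      _ = ∫ u, H a (ext u) ∂(Measure.map (fun (ω : ℕ → Ω₀) (i : Fin m) => ω i) P) :=
          (integral_map (hresm m).aemeasurable hsm).symm
      _ = ∫ u, H a (ext u) ∂(Measure.pi fun _ : Fin m => P₀) := by rw [hP m]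
  -- the finite-coordinate function
  set K : (Fin (m + 1) → Ω₀) → ℝ := fun u => H (u 0) (ext (fun i : Fin m => u i.succ)) with hK
  have hKm : Measurable K := by
    have h0 : Measurable fun u : Fin (m + 1) → Ω₀ => u 0 := measurable_pi_apply _
    have htail0 : Measurable fun (u : Fin (m + 1) → Ω₀) (i : Fin m) => u i.succ :=
      measurable_pi_lambda _ (fun i => measurable_pi_apply i.succ)
    have htail : Measurable fun u : Fin (m + 1) → Ω₀ => ext (fun i : Fin m => u i.succ) :=
      hextm.comp htail0
    exact hHm.comp (h0.prodMk htail)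
  have hKsm : AEStronglyMeasurable K
      (Measure.map (fun (ω : ℕ → Ω₀) (i : Fin (m + 1)) => ω i) P) := hKm.aestronglyMeasurable
  have hLHS : ∫ ω, H (ω 0) (fun i => ω (i + 1)) ∂P
      = ∫ u, K u ∂(Measure.pi fun _ : Fin (m + 1) => P₀) := by
    calc ∫ ω, H (ω 0) (fun i => ω (i + 1)) ∂P
        = ∫ ω, K (fun i : Fin (m + 1) => ω i) ∂P := by
          refine integral_congr_ae (ae_of_all _ (fun ω => ?_))
          show H (ω 0) (fun i => ω (i + 1))
            = H (ω ((0 : Fin (m + 1)) : ℕ)) (ext fun i : Fin m => ω ((i.succ : Fin (m + 1)) : ℕ))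
          refine hdep _ _ _ (fun i hi => ?_)
          simp [ext, hi]
      _ = ∫ u, K u ∂(Measure.map (fun (ω : ℕ → Ω₀) (i : Fin (m + 1)) => ω i) P) :=
          (integral_map (hresm (m + 1)).aemeasurable hKsm).symm
      _ = ∫ u, K u ∂(Measure.pi fun _ : Fin (m + 1) => P₀) := by rw [hP (m + 1)]
  rw [hLHS]
  -- split the pi measure into first coordinate and rest
  have hmp := (measurePreserving_piFinSuccAbove (fun _ : Fin (m + 1) => P₀) 0).symm
    (MeasurableEquiv.piFinSuccAbove (fun _ : Fin (m + 1) => Ω₀) 0)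
  have hsplit : ∫ u, K u ∂(Measure.pi fun _ : Fin (m + 1) => P₀)
      = ∫ p, K ((MeasurableEquiv.piFinSuccAbove (fun _ : Fin (m + 1) => Ω₀) 0).symm p)
          ∂(P₀.prod (Measure.pi fun _ : Fin m => P₀)) := by
    rw [← MeasurePreserving.integral_comp hmp
      (MeasurableEquiv.piFinSuccAbove (fun _ : Fin (m + 1) => Ω₀) 0).symm.measurableEmbedding K]
  rw [hsplit]
  have hKsymm : ∀ (a : Ω₀) (u : Fin m → Ω₀),
      K ((MeasurableEquiv.piFinSuccAbove (fun _ : Fin (m + 1) => Ω₀) 0).symm (a, u))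
        = H a (ext u) := by
    intro a u
    have h0 : (MeasurableEquiv.piFinSuccAbove (fun _ : Fin (m + 1) => Ω₀) 0).symm (a, u)
        = Fin.cons a u := by
      simp only [MeasurableEquiv.piFinSuccAbove_symm_apply, Fin.insertNthEquiv,
        Equiv.coe_fn_mk, Fin.insertNth_zero']
    rw [hK]
    simp only [h0, Fin.cons_zero, Fin.cons_succ]
  have hprodint : Integrable
      (fun p : Ω₀ × (Fin m → Ω₀) =>
        K ((MeasurableEquiv.piFinSuccAbove (fun _ : Fin (m + 1) => Ω₀) 0).symm p))
      (P₀.prod (Measure.pi fun _ : Fin m => P₀)) := by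
    refine my_integrable_of_bdd ((hKm.comp
      (MeasurableEquiv.piFinSuccAbove (fun _ : Fin (m + 1) => Ω₀) 0).symm.measurable)).aestronglyMeasurable
      (c := c) (fun p => ?_)
    exact hc _ _
  rw [integral_prod _ hprodint]
  refine integral_congr_ae (ae_of_all _ (fun a => ?_))
  beta_reduce
  rw [hinner a]
  refine integral_congr_ae (ae_of_all _ (fun u => ?_))
  beta_reduce
  exact hKsymm a u

end StepIntegral

section Main

variable {X : Type*} [MetricSpace X] [CompactSpace X] [MeasurableSpace X] [BorelSpace X]
variable (κ : X → Measure X)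
variable (hκprob : ∀ x, IsProbabilityMeasure (κ x))
variable (hFeller : ∀ f : X → ℝ, Continuous f → Continuous fun x => ∫ y, f y ∂(κ x))
variable {Ω₀ : Type*} [MeasurableSpace Ω₀] (P₀ : Measure Ω₀) [IsProbabilityMeasure P₀]
variable (R R' : X → X → Ω₀ → X)
variable (hRmeas : Measurable fun p : (X × X) × Ω₀ => R p.1.1 p.1.2 p.2)
variable (hR'meas : Measurable fun p : (X × X) × Ω₀ => R' p.1.1 p.1.2 p.2)
variable (hRlaw : ∀ x x' : X, Measure.map (R x x') P₀ = κ x)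
variable (P : Measure (ℕ → Ω₀)) [IsProbabilityMeasure P]
variable (hP : ∀ n : ℕ, Measure.map (fun ω (i : Fin n) => ω i) P = Measure.pi fun _ : Fin n => P₀)
variable (V : X → ℝ) (hV : Continuous V)

include hRmeas in
lemma measR (x x' : X) : Measurable fun a : Ω₀ => R x x' a := by
  have hpair : Measurable fun a : Ω₀ => (((x, x'), a) : (X × X) × Ω₀) :=
    measurable_const.prodMk measurable_id
  exact hRmeas.comp hpair

include hRmeas hRlaw hV hFeller in
lemma FK_eq_integral_R {g : X → ℝ} (hg : Continuous g) (x x' : X) :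
    ∫ a, Real.exp (V (R x x' a)) * g (R x x' a) ∂P₀ = FK κ V g x := by
  have hgm : AEStronglyMeasurable (fun y => Real.exp (V y) * g y) (Measure.map (R x x') P₀) :=
    ((Real.continuous_exp.comp hV).mul hg).aestronglyMeasurable
  rw [FK, ← hRlaw x x', integral_map (measR R hRmeas x x').aemeasurable hgm]

include hκprob hFeller hRmeas hR'meas hRlaw hP hV in
lemma FKiter_eq_int [Nonempty X] {f : X → ℝ} (hf : Continuous f) :
    ∀ (m : ℕ) (x x' : X),
      ∫ ω, f (chain R R' x x' m ω).1
          * Real.exp (∑ i ∈ Finset.Icc 1 m, V (chain R R' x x' i ω).1) ∂P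
        = FKiter κ V m f x := by
  intro m
  induction m with
  | zero =>
      intro x x'
      simp [chain, FKiter]
  | succ m ih =>
      intro x x'
      -- the one-step-peeled integrand
      set H : Ω₀ → (ℕ → Ω₀) → ℝ := fun a ω =>
        Real.exp (V (R x x' a)) *
          (f (chain R R' (R x x' a) (R' x x' a) m ω).1 *
            Real.exp (∑ i ∈ Finset.Icc 1 m, V (chain R R' (R x x' a) (R' x x' a) i ω).1))
        with hHdef
      have hHm : Measurable fun p : Ω₀ × (ℕ → Ω₀) => H p.1 p.2 := by
        have hstart : Measurable fun p : Ω₀ × (ℕ → Ω₀) =>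
            (((R x x' p.1, R' x x' p.1), p.2) : (X × X) × (ℕ → Ω₀)) :=
          (((measR R hRmeas x x').comp measurable_fst).prodMk
            ((measR R' hR'meas x x').comp measurable_fst)).prodMk measurable_snd
        have hc1 : Measurable fun p : Ω₀ × (ℕ → Ω₀) => Real.exp (V (R x x' p.1)) :=
          (Real.continuous_exp.comp hV).measurable.comp ((measR R hRmeas x x').comp measurable_fst)
        have hc2 : Measurable fun p : Ω₀ × (ℕ → Ω₀) =>
            f (chain R R' (R x x' p.1) (R' x x' p.1) m p.2).1 :=
          hf.measurable.comp (((chain_measurable_pair R R' hRmeas hR'meas m).comp hstart).fst)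
        have hc3 : Measurable fun p : Ω₀ × (ℕ → Ω₀) =>
            Real.exp (∑ i ∈ Finset.Icc 1 m, V (chain R R' (R x x' p.1) (R' x x' p.1) i p.2).1) := by
          refine Real.continuous_exp.measurable.comp (Finset.measurable_sum _ (fun i _ => ?_))
          exact hV.measurable.comp
            (((chain_measurable_pair R R' hRmeas hR'meas i).comp hstart).fst)
        exact hc1.mul (hc2.mul hc3)
      have hbd : ∀ a ω, |H a ω|
          ≤ Real.exp (supNorm V) * (supNorm f * Real.exp (m * supNorm V)) := by
        intro a ω
        rw [hHdef]
        simp only [abs_mul, abs_of_pos (Real.exp_pos _)]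
        have h1 : Real.exp (V (R x x' a)) ≤ Real.exp (supNorm V) :=
          Real.exp_le_exp.2 (self_le_supNorm hV _)
        have h2 : |f (chain R R' (R x x' a) (R' x x' a) m ω).1| ≤ supNorm f :=
          le_supNorm hf _
        have h3 : Real.exp (∑ i ∈ Finset.Icc 1 m,
              V (chain R R' (R x x' a) (R' x x' a) i ω).1) ≤ Real.exp (m * supNorm V) := by
          refine Real.exp_le_exp.2 ?_
          calc ∑ i ∈ Finset.Icc 1 m, V (chain R R' (R x x' a) (R' x x' a) i ω).1
              ≤ (Finset.Icc 1 m).card • supNorm V :=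
                Finset.sum_le_card_nsmul _ _ _ (fun i _ => self_le_supNorm hV _)
            _ = m * supNorm V := by
                simp [Nat.card_Icc]
        refine mul_le_mul h1 (mul_le_mul h2 h3 (Real.exp_pos _).le
          ((abs_nonneg _).trans h2)) ?_ (Real.exp_pos _).le
        exact mul_nonneg (abs_nonneg _) (Real.exp_pos _).le
      have hdep : ∀ a (ω ω' : ℕ → Ω₀), (∀ i < m, ω i = ω' i) → H a ω = H a ω' := by
        intro a ω ω' hagree
        rw [hHdef]
        simp only
        have hsum : (∑ i ∈ Finset.Icc 1 m, V (chain R R' (R x x' a) (R' x x' a) i ω).1)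
            = ∑ i ∈ Finset.Icc 1 m, V (chain R R' (R x x' a) (R' x x' a) i ω').1 := by
          refine Finset.sum_congr rfl (fun i hi => ?_)
          have : i ≤ m := (Finset.mem_Icc.1 hi).2
          rw [chain_congr R R' _ _ i (fun j hj => hagree j (by omega))]
        rw [chain_congr R R' _ _ m hagree, hsum]
      have hpeel : ∀ ω : ℕ → Ω₀,
          f (chain R R' x x' (m + 1) ω).1
            * Real.exp (∑ i ∈ Finset.Icc 1 (m + 1), V (chain R R' x x' i ω).1)
          = H (ω 0) (fun i => ω (i + 1)) := by
        intro ω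
        rw [hHdef]
        simp only
        rw [chain_shift R R' x x' m ω, sum_V_shift R R' V x x' m ω, Real.exp_add]
        ring
      calc ∫ ω, f (chain R R' x x' (m + 1) ω).1
              * Real.exp (∑ i ∈ Finset.Icc 1 (m + 1), V (chain R R' x x' i ω).1) ∂P
          = ∫ ω, H (ω 0) (fun i => ω (i + 1)) ∂P :=
            integral_congr_ae (ae_of_all _ hpeel)
        _ = ∫ a, ∫ ω, H a ω ∂P ∂P₀ :=
            step_integral P₀ P hP m H hHm _ hbd hdep
        _ = ∫ a, Real.exp (V (R x x' a)) * FKiter κ V m f (R x x' a) ∂P₀ := by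
            refine integral_congr_ae (ae_of_all _ (fun a => ?_))
            beta_reduce
            rw [hHdef]
            simp only
            rw [integral_const_mul, ih (R x x' a) (R' x x' a)]
        _ = FK κ V (FKiter κ V m f) x :=
            FK_eq_integral_R κ hFeller P₀ R hRmeas hRlaw V hV
              (FKiter_cont κ hFeller V hV m hf) x x'
        _ = FKiter κ V (m + 1) f x := rfl

lemma abs_integral_le_integral_abs_my {α : Type*} [MeasurableSpace α] {μ : Measure α}
    (g : α → ℝ) : |∫ a, g a ∂μ| ≤ ∫ a, |g a| ∂μ := by
  simpa [Real.norm_eq_abs] using norm_integral_le_integral_norm g (μ := μ)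

include hV in
lemma le_csupV (z : X) : V z ≤ ⨆ y, V y := by
  have hb : BddAbove (Set.range V) := by
    simpa [Set.image_univ] using (isCompact_univ (X := X)).bddAbove_image hV.continuousOn
  exact le_ciSup hb z

include hκprob hFeller hRmeas hR'meas hRlaw hP hV in
lemma main_ind [Nonempty X] {f : X → ℝ} (hf : Continuous f)
    (q : ℝ) (hq0 : 0 ≤ q) (C : ℝ) (hC : 0 < C)
    (hcouple : ∀ x x' : X, P₀ {ω | q * dist x x' < dist (R x x' ω) (R' x x' ω)}
      ≤ ENNReal.ofReal (C * dist x x')) :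
    ∀ (k n : ℕ) (x x' : X), k + 1 ≤ n →
      |∫ ω, (eventC R R' x x' q k).indicator
          (fun ω => f (chain R R' x x' n ω).1
            * Real.exp (∑ i ∈ Finset.Icc 1 n, V (chain R R' x x' i ω).1)) ω ∂P|
        ≤ C * Real.exp (⨆ y : X, V y) * supNorm f
            * supNorm (FKiter κ V (n - k - 1) (1 : X → ℝ))
            * FKiter κ V k (1 : X → ℝ) x * q ^ k * dist x x' := by
  -- common abbreviations
  have hsupf : 0 ≤ supNorm f := supNorm_nonneg hf
  have hFKcont : ∀ j : ℕ, Continuous (FKiter κ V j (1 : X → ℝ)) := fun j =>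
    FKiter_cont κ hFeller V hV j continuous_const
  have hsupFK : ∀ j : ℕ, 0 ≤ supNorm (FKiter κ V j (1 : X → ℝ)) := fun j =>
    supNorm_nonneg (hFKcont j)
  intro k
  induction k with
  | zero =>
    intro n x x' hn
    obtain ⟨m, rfl⟩ : ∃ m, n = m + 1 := ⟨n - 1, by omega⟩
    set bad : Set Ω₀ := {b | ¬ dist (R x x' b) (R' x x' b) ≤ q * dist x x'} with hbad
    have hbadmeas : MeasurableSet bad :=
      (measurableSet_le ((measR R hRmeas x x').dist (measR R' hR'meas x x'))
        measurable_const).compl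
    set H : Ω₀ → (ℕ → Ω₀) → ℝ := fun a ω =>
      Set.indicator bad (fun b => Real.exp (V (R x x' b))) a *
        (f (chain R R' (R x x' a) (R' x x' a) m ω).1 *
          Real.exp (∑ i ∈ Finset.Icc 1 m, V (chain R R' (R x x' a) (R' x x' a) i ω).1))
      with hHdef
    -- pointwise identification
    have hpeel : ∀ ω : ℕ → Ω₀,
        (eventC R R' x x' q 0).indicator
          (fun ω => f (chain R R' x x' (m + 1) ω).1
            * Real.exp (∑ i ∈ Finset.Icc 1 (m + 1), V (chain R R' x x' i ω).1)) ω
        = H (ω 0) (fun i => ω (i + 1)) := by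
      intro ω
      by_cases hmem : ω ∈ eventC R R' x x' q 0
      · rw [Set.indicator_of_mem hmem, hHdef]
        have hb : (ω 0) ∈ bad := (mem_eventC_zero R R' q x x' ω).1 hmem
        beta_reduce
        rw [Set.indicator_of_mem hb, chain_shift R R' x x' m ω, sum_V_shift R R' V x x' m ω,
          Real.exp_add]
        ring
      · rw [Set.indicator_of_notMem hmem, hHdef]
        have hb : (ω 0) ∉ bad := by
          intro hcon
          exact hmem ((mem_eventC_zero R R' q x x' ω).2 hcon)
        beta_reduce
        rw [Set.indicator_of_notMem hb, zero_mul]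
    have hHm : Measurable fun p : Ω₀ × (ℕ → Ω₀) => H p.1 p.2 := by
      have hstart : Measurable fun p : Ω₀ × (ℕ → Ω₀) =>
          (((R x x' p.1, R' x x' p.1), p.2) : (X × X) × (ℕ → Ω₀)) :=
        (((measR R hRmeas x x').comp measurable_fst).prodMk
          ((measR R' hR'meas x x').comp measurable_fst)).prodMk measurable_snd
      have hc1 : Measurable fun p : Ω₀ × (ℕ → Ω₀) =>
          Set.indicator bad (fun b => Real.exp (V (R x x' b))) p.1 :=
        (Measurable.indicator ((Real.continuous_exp.comp hV).measurable.comp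
          (measR R hRmeas x x')) hbadmeas).comp measurable_fst
      have hc2 : Measurable fun p : Ω₀ × (ℕ → Ω₀) =>
          f (chain R R' (R x x' p.1) (R' x x' p.1) m p.2).1 :=
        hf.measurable.comp (((chain_measurable_pair R R' hRmeas hR'meas m).comp hstart).fst)
      have hc3 : Measurable fun p : Ω₀ × (ℕ → Ω₀) =>
          Real.exp (∑ i ∈ Finset.Icc 1 m, V (chain R R' (R x x' p.1) (R' x x' p.1) i p.2).1) := by
        refine Real.continuous_exp.measurable.comp (Finset.measurable_sum _ (fun i _ => ?_))
        exact hV.measurable.comp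
          (((chain_measurable_pair R R' hRmeas hR'meas i).comp hstart).fst)
      exact hc1.mul (hc2.mul hc3)
    have hbd : ∀ a ω, |H a ω|
        ≤ Real.exp (supNorm V) * (supNorm f * Real.exp (m * supNorm V)) := by
      intro a ω
      rw [hHdef]
      beta_reduce
      rw [abs_mul, abs_mul]
      have h2 : |f (chain R R' (R x x' a) (R' x x' a) m ω).1| ≤ supNorm f := le_supNorm hf _
      have h3 : |Real.exp (∑ i ∈ Finset.Icc 1 m,
            V (chain R R' (R x x' a) (R' x x' a) i ω).1)| ≤ Real.exp (m * supNorm V) := by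
        rw [abs_of_pos (Real.exp_pos _)]
        refine Real.exp_le_exp.2 ?_
        calc ∑ i ∈ Finset.Icc 1 m, V (chain R R' (R x x' a) (R' x x' a) i ω).1
            ≤ (Finset.Icc 1 m).card • supNorm V :=
              Finset.sum_le_card_nsmul _ _ _ (fun i _ => self_le_supNorm hV _)
          _ = m * supNorm V := by simp [Nat.card_Icc]
      have h1 : |Set.indicator bad (fun b => Real.exp (V (R x x' b))) a|
          ≤ Real.exp (supNorm V) := by
        by_cases hb : a ∈ bad
        · rw [Set.indicator_of_mem hb, abs_of_pos (Real.exp_pos _)]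
          exact Real.exp_le_exp.2 (self_le_supNorm hV _)
        · rw [Set.indicator_of_notMem hb, abs_zero]
          exact (Real.exp_pos _).le
      exact mul_le_mul h1 (mul_le_mul h2 h3 (abs_nonneg _) hsupf)
        (mul_nonneg (abs_nonneg _) (abs_nonneg _)) (Real.exp_pos _).le
    have hdep : ∀ a (ω ω' : ℕ → Ω₀), (∀ i < m, ω i = ω' i) → H a ω = H a ω' := by
      intro a ω ω' hagree
      rw [hHdef]
      beta_reduce
      have hsum : (∑ i ∈ Finset.Icc 1 m, V (chain R R' (R x x' a) (R' x x' a) i ω).1)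
          = ∑ i ∈ Finset.Icc 1 m, V (chain R R' (R x x' a) (R' x x' a) i ω').1 := by
        refine Finset.sum_congr rfl (fun i hi => ?_)
        have : i ≤ m := (Finset.mem_Icc.1 hi).2
        rw [chain_congr R R' _ _ i (fun j hj => hagree j (by omega))]
      rw [chain_congr R R' _ _ m hagree, hsum]
    -- the peeled integral
    have hstep : ∫ ω, (eventC R R' x x' q 0).indicator
          (fun ω => f (chain R R' x x' (m + 1) ω).1
            * Real.exp (∑ i ∈ Finset.Icc 1 (m + 1), V (chain R R' x x' i ω).1)) ω ∂P
        = ∫ a, Set.indicator bad (fun b => Real.exp (V (R x x' b))) a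
            * FKiter κ V m f (R x x' a) ∂P₀ := by
      rw [integral_congr_ae (ae_of_all _ hpeel), step_integral P₀ P hP m H hHm _ hbd hdep]
      refine integral_congr_ae (ae_of_all _ (fun a => ?_))
      beta_reduce
      rw [hHdef]
      beta_reduce
      rw [integral_const_mul,
        FKiter_eq_int κ hκprob hFeller P₀ R R' hRmeas hR'meas hRlaw P hP V hV hf m
          (R x x' a) (R' x x' a)]
    rw [hstep]
    -- now estimate
    set K : ℝ := Real.exp (⨆ y : X, V y) * (supNorm f * supNorm (FKiter κ V m (1 : X → ℝ)))
      with hKdef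
    have hK0 : 0 ≤ K := by
      have := (Real.exp_pos (⨆ y : X, V y)).le
      exact mul_nonneg this (mul_nonneg hsupf (hsupFK m))
    have hptbd : ∀ a : Ω₀, |Set.indicator bad (fun b => Real.exp (V (R x x' b))) a|
          * |FKiter κ V m f (R x x' a)|
        ≤ Set.indicator bad (fun _ => K) a := by
      intro a
      by_cases hb : a ∈ bad
      · rw [Set.indicator_of_mem hb, Set.indicator_of_mem hb,
          abs_of_pos (Real.exp_pos _), hKdef]
        refine mul_le_mul (Real.exp_le_exp.2 (le_csupV V hV _)) ?_ (abs_nonneg _)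
          (Real.exp_pos _).le
        refine (abs_FKiter_le κ hκprob hFeller V hV hf m (R x x' a)).trans ?_
        exact mul_le_mul_of_nonneg_left (self_le_supNorm (hFKcont m) _) hsupf
      · rw [Set.indicator_of_notMem hb, Set.indicator_of_notMem hb, abs_zero, zero_mul]
    have hJint : Integrable (Set.indicator bad (fun _ => K)) P₀ :=
      my_integrable_of_bdd ((measurable_const.indicator hbadmeas).aestronglyMeasurable)
        (c := |K|) (fun a => by
          by_cases hb : a ∈ bad
          · rw [Set.indicator_of_mem hb]
          · rw [Set.indicator_of_notMem hb, abs_zero]; exact abs_nonneg _)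
    have hmeasbound : (P₀ bad).toReal ≤ C * dist x x' := by
      have hbadeq : bad = {b : Ω₀ | q * dist x x' < dist (R x x' b) (R' x x' b)} := by
        ext b; simp [hbad, not_le]
      rw [hbadeq]
      exact ENNReal.toReal_le_of_le_ofReal (mul_nonneg hC.le dist_nonneg) (hcouple x x')
    calc |∫ a, Set.indicator bad (fun b => Real.exp (V (R x x' b))) a
            * FKiter κ V m f (R x x' a) ∂P₀|
        ≤ ∫ a, |Set.indicator bad (fun b => Real.exp (V (R x x' b))) a|
            * |FKiter κ V m f (R x x' a)| ∂P₀ := by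
          simpa [Real.norm_eq_abs] using norm_integral_le_integral_norm
            (fun a => Set.indicator bad (fun b => Real.exp (V (R x x' b))) a
              * FKiter κ V m f (R x x' a)) (μ := P₀)
      _ ≤ ∫ a, Set.indicator bad (fun _ => K) a ∂P₀ :=
          integral_mono_of_nonneg (ae_of_all _ (fun a =>
            mul_nonneg (abs_nonneg _) (abs_nonneg _))) hJint (ae_of_all _ hptbd)
      _ = (P₀ bad).toReal * K := by
          rw [integral_indicator_const _ hbadmeas]; simp [smul_eq_mul, Measure.real]
      _ ≤ (C * dist x x') * K := mul_le_mul_of_nonneg_right hmeasbound hK0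
      _ = C * Real.exp (⨆ y : X, V y) * supNorm f
            * supNorm (FKiter κ V (m + 1 - 0 - 1) (1 : X → ℝ))
            * FKiter κ V 0 (1 : X → ℝ) x * q ^ 0 * dist x x' := by
          have h1 : m + 1 - 0 - 1 = m := by omega
          rw [h1, hKdef]
          show (C * dist x x') * (Real.exp (⨆ y : X, V y)
            * (supNorm f * supNorm (FKiter κ V m (1 : X → ℝ))))
            = C * Real.exp (⨆ y : X, V y) * supNorm f
              * supNorm (FKiter κ V m (1 : X → ℝ)) * (1 : ℝ) * 1 * dist x x'
          ring
  | succ k ih =>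
    intro n x x' hn
    obtain ⟨m, rfl⟩ : ∃ m, n = m + 1 := ⟨n - 1, by omega⟩
    have hkm : k + 1 ≤ m := by omega
    set good : Set Ω₀ := {b | dist (R x x' b) (R' x x' b) ≤ q * dist x x'} with hgood
    have hgoodmeas : MeasurableSet good :=
      measurableSet_le ((measR R hRmeas x x').dist (measR R' hR'meas x x')) measurable_const
    set S : Set (Ω₀ × (ℕ → Ω₀)) :=
      {p | p.2 ∈ eventC R R' (R x x' p.1) (R' x x' p.1) q k} with hS
    have hSmeas : MeasurableSet S := measurableSet_eventC_prod R R' q hRmeas hR'meas x x' k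
    set G : Ω₀ × (ℕ → Ω₀) → ℝ := fun p =>
      f (chain R R' (R x x' p.1) (R' x x' p.1) m p.2).1 *
        Real.exp (∑ i ∈ Finset.Icc 1 m, V (chain R R' (R x x' p.1) (R' x x' p.1) i p.2).1)
      with hG
    set H : Ω₀ → (ℕ → Ω₀) → ℝ := fun a ω =>
      Set.indicator good (fun b => Real.exp (V (R x x' b))) a *
        Set.indicator S G (a, ω) with hHdef
    have hstart : Measurable fun p : Ω₀ × (ℕ → Ω₀) =>
        (((R x x' p.1, R' x x' p.1), p.2) : (X × X) × (ℕ → Ω₀)) :=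
      (((measR R hRmeas x x').comp measurable_fst).prodMk
        ((measR R' hR'meas x x').comp measurable_fst)).prodMk measurable_snd
    have hGm : Measurable G := by
      have hc2 : Measurable fun p : Ω₀ × (ℕ → Ω₀) =>
          f (chain R R' (R x x' p.1) (R' x x' p.1) m p.2).1 :=
        hf.measurable.comp (((chain_measurable_pair R R' hRmeas hR'meas m).comp hstart).fst)
      have hc3 : Measurable fun p : Ω₀ × (ℕ → Ω₀) =>
          Real.exp (∑ i ∈ Finset.Icc 1 m, V (chain R R' (R x x' p.1) (R' x x' p.1) i p.2).1) := by
        refine Real.continuous_exp.measurable.comp (Finset.measurable_sum _ (fun i _ => ?_))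
        exact hV.measurable.comp
          (((chain_measurable_pair R R' hRmeas hR'meas i).comp hstart).fst)
      exact hc2.mul hc3
    have hGbd : ∀ p, |G p| ≤ supNorm f * Real.exp (m * supNorm V) := by
      intro p
      rw [hG]
      beta_reduce
      rw [abs_mul]
      have h2 : |f (chain R R' (R x x' p.1) (R' x x' p.1) m p.2).1| ≤ supNorm f :=
        le_supNorm hf _
      have h3 : |Real.exp (∑ i ∈ Finset.Icc 1 m,
            V (chain R R' (R x x' p.1) (R' x x' p.1) i p.2).1)|
          ≤ Real.exp (m * supNorm V) := by
        rw [abs_of_pos (Real.exp_pos _)]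
        refine Real.exp_le_exp.2 ?_
        calc ∑ i ∈ Finset.Icc 1 m, V (chain R R' (R x x' p.1) (R' x x' p.1) i p.2).1
            ≤ (Finset.Icc 1 m).card • supNorm V :=
              Finset.sum_le_card_nsmul _ _ _ (fun i _ => self_le_supNorm hV _)
          _ = m * supNorm V := by simp [Nat.card_Icc]
      exact mul_le_mul h2 h3 (abs_nonneg _) hsupf
    -- pointwise identification
    have hpeel : ∀ ω : ℕ → Ω₀,
        (eventC R R' x x' q (k + 1)).indicator
          (fun ω => f (chain R R' x x' (m + 1) ω).1
            * Real.exp (∑ i ∈ Finset.Icc 1 (m + 1), V (chain R R' x x' i ω).1)) ω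
        = H (ω 0) (fun i => ω (i + 1)) := by
      intro ω
      by_cases h1 : dist (R x x' (ω 0)) (R' x x' (ω 0)) ≤ q * dist x x'
      · by_cases h2 : (fun i => ω (i + 1)) ∈
            eventC R R' (R x x' (ω 0)) (R' x x' (ω 0)) q k
        · have hmem : ω ∈ eventC R R' x x' q (k + 1) :=
            (mem_eventC_succ R R' q x x' k ω).2 ⟨h1, h2⟩
          have hSin : ((ω 0, fun i => ω (i + 1)) : Ω₀ × (ℕ → Ω₀)) ∈ S := h2
          rw [Set.indicator_of_mem hmem, hHdef]
          beta_reduce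
          rw [Set.indicator_of_mem (show (ω 0) ∈ good from h1),
            Set.indicator_of_mem hSin, hG]
          beta_reduce
          rw [chain_shift R R' x x' m ω, sum_V_shift R R' V x x' m ω, Real.exp_add]
          ring
        · have hmem : ω ∉ eventC R R' x x' q (k + 1) := by
            intro hcon
            exact h2 ((mem_eventC_succ R R' q x x' k ω).1 hcon).2
          have hSout : ((ω 0, fun i => ω (i + 1)) : Ω₀ × (ℕ → Ω₀)) ∉ S := h2
          rw [Set.indicator_of_notMem hmem, hHdef]
          beta_reduce
          rw [Set.indicator_of_notMem hSout, mul_zero]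
      · have hmem : ω ∉ eventC R R' x x' q (k + 1) := by
          intro hcon
          exact h1 ((mem_eventC_succ R R' q x x' k ω).1 hcon).1
        rw [Set.indicator_of_notMem hmem, hHdef]
        beta_reduce
        rw [Set.indicator_of_notMem (show (ω 0) ∉ good from h1), zero_mul]
    have hHm : Measurable fun p : Ω₀ × (ℕ → Ω₀) => H p.1 p.2 := by
      have hc1 : Measurable fun p : Ω₀ × (ℕ → Ω₀) =>
          Set.indicator good (fun b => Real.exp (V (R x x' b))) p.1 :=
        (Measurable.indicator ((Real.continuous_exp.comp hV).measurable.comp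
          (measR R hRmeas x x')) hgoodmeas).comp measurable_fst
      exact hc1.mul (hGm.indicator hSmeas)
    have hbd : ∀ a ω, |H a ω|
        ≤ Real.exp (supNorm V) * (supNorm f * Real.exp (m * supNorm V)) := by
      intro a ω
      rw [hHdef]
      beta_reduce
      rw [abs_mul]
      have h1 : |Set.indicator good (fun b => Real.exp (V (R x x' b))) a|
          ≤ Real.exp (supNorm V) := by
        by_cases hb : a ∈ good
        · rw [Set.indicator_of_mem hb, abs_of_pos (Real.exp_pos _)]
          exact Real.exp_le_exp.2 (self_le_supNorm hV _)
        · rw [Set.indicator_of_notMem hb, abs_zero]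
          exact (Real.exp_pos _).le
      have h2 : |Set.indicator S G (a, ω)| ≤ supNorm f * Real.exp (m * supNorm V) := by
        by_cases hb : ((a, ω) : Ω₀ × (ℕ → Ω₀)) ∈ S
        · rw [Set.indicator_of_mem hb]; exact hGbd _
        · rw [Set.indicator_of_notMem hb, abs_zero]
          exact mul_nonneg hsupf (Real.exp_pos _).le
      exact mul_le_mul h1 h2 (abs_nonneg _) (Real.exp_pos _).le
    have hdep : ∀ a (ω ω' : ℕ → Ω₀), (∀ i < m, ω i = ω' i) → H a ω = H a ω' := by
      intro a ω ω' hagree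
      rw [hHdef]
      beta_reduce
      have hGeq : G (a, ω) = G (a, ω') := by
        rw [hG]
        beta_reduce
        have hsum : (∑ i ∈ Finset.Icc 1 m, V (chain R R' (R x x' a) (R' x x' a) i ω).1)
            = ∑ i ∈ Finset.Icc 1 m, V (chain R R' (R x x' a) (R' x x' a) i ω').1 := by
          refine Finset.sum_congr rfl (fun i hi => ?_)
          have : i ≤ m := (Finset.mem_Icc.1 hi).2
          rw [chain_congr R R' _ _ i (fun j hj => hagree j (by omega))]
        rw [chain_congr R R' _ _ m hagree, hsum]
      have hSiff : (((a, ω) : Ω₀ × (ℕ → Ω₀)) ∈ S) ↔ (((a, ω') : Ω₀ × (ℕ → Ω₀)) ∈ S) :=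
        mem_eventC_congr R R' q (R x x' a) (R' x x' a) k
          (fun i hi => hagree i (by omega))
      by_cases hb : ((a, ω) : Ω₀ × (ℕ → Ω₀)) ∈ S
      · rw [Set.indicator_of_mem hb, Set.indicator_of_mem (hSiff.1 hb), hGeq]
      · rw [Set.indicator_of_notMem hb, Set.indicator_of_notMem (fun hc => hb (hSiff.2 hc))]
    -- the inner integral as the IH integral
    have hinnereq : ∀ a : Ω₀, ∫ ω, Set.indicator S G (a, ω) ∂P
        = ∫ ω, (eventC R R' (R x x' a) (R' x x' a) q k).indicator
            (fun ω => f (chain R R' (R x x' a) (R' x x' a) m ω).1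
              * Real.exp (∑ i ∈ Finset.Icc 1 m,
                  V (chain R R' (R x x' a) (R' x x' a) i ω).1)) ω ∂P := by
      intro a
      refine integral_congr_ae (ae_of_all _ (fun ω => ?_))
      beta_reduce
      by_cases hb : ω ∈ eventC R R' (R x x' a) (R' x x' a) q k
      · rw [Set.indicator_of_mem (show ((a, ω) : Ω₀ × (ℕ → Ω₀)) ∈ S from hb),
          Set.indicator_of_mem hb, hG]
      · rw [Set.indicator_of_notMem (show ((a, ω) : Ω₀ × (ℕ → Ω₀)) ∉ S from hb),
          Set.indicator_of_notMem hb]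
    -- the peeled integral
    have hstep : ∫ ω, (eventC R R' x x' q (k + 1)).indicator
          (fun ω => f (chain R R' x x' (m + 1) ω).1
            * Real.exp (∑ i ∈ Finset.Icc 1 (m + 1), V (chain R R' x x' i ω).1)) ω ∂P
        = ∫ a, Set.indicator good (fun b => Real.exp (V (R x x' b))) a
            * ∫ ω, (eventC R R' (R x x' a) (R' x x' a) q k).indicator
                (fun ω => f (chain R R' (R x x' a) (R' x x' a) m ω).1
                  * Real.exp (∑ i ∈ Finset.Icc 1 m,
                      V (chain R R' (R x x' a) (R' x x' a) i ω).1)) ω ∂P ∂P₀ := by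
      rw [integral_congr_ae (ae_of_all _ hpeel), step_integral P₀ P hP m H hHm _ hbd hdep]
      refine integral_congr_ae (ae_of_all _ (fun a => ?_))
      beta_reduce
      rw [hHdef]
      beta_reduce
      rw [integral_const_mul, hinnereq a]
    rw [hstep]
    -- constants
    set D : ℝ := C * Real.exp (⨆ y : X, V y) * supNorm f
      * supNorm (FKiter κ V (m - k - 1) (1 : X → ℝ)) with hDdef
    have hD0 : 0 ≤ D := by
      refine mul_nonneg (mul_nonneg (mul_nonneg hC.le (Real.exp_pos _).le) hsupf) (hsupFK _)
    -- pointwise bound on the outer integrand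
    set J : Ω₀ → ℝ := Set.indicator good (fun b => Real.exp (V (R x x' b))
      * (D * FKiter κ V k (1 : X → ℝ) (R x x' b) * q ^ k * (q * dist x x'))) with hJdef
    have hg0 : ∀ b : Ω₀, 0 ≤ Real.exp (V (R x x' b))
        * (D * FKiter κ V k (1 : X → ℝ) (R x x' b) * q ^ k * (q * dist x x')) := by
      intro b
      refine mul_nonneg (Real.exp_pos _).le ?_
      refine mul_nonneg (mul_nonneg (mul_nonneg hD0 (FKiter_one_nonneg κ V k _)) ?_) ?_
      · exact pow_nonneg hq0 k
      · exact mul_nonneg hq0 dist_nonneg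
    have hptbd : ∀ a : Ω₀,
        |Set.indicator good (fun b => Real.exp (V (R x x' b))) a
          * ∫ ω, (eventC R R' (R x x' a) (R' x x' a) q k).indicator
              (fun ω => f (chain R R' (R x x' a) (R' x x' a) m ω).1
                * Real.exp (∑ i ∈ Finset.Icc 1 m,
                    V (chain R R' (R x x' a) (R' x x' a) i ω).1)) ω ∂P|
        ≤ J a := by
      intro a
      by_cases hb : a ∈ good
      · rw [hJdef, Set.indicator_of_mem hb, Set.indicator_of_mem hb, abs_mul,
          abs_of_pos (Real.exp_pos _)]
        refine mul_le_mul_of_nonneg_left ?_ (Real.exp_pos _).le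
        have hIH := ih m (R x x' a) (R' x x' a) hkm
        have hda : dist (R x x' a) (R' x x' a) ≤ q * dist x x' := hb
        calc |∫ ω, (eventC R R' (R x x' a) (R' x x' a) q k).indicator
                (fun ω => f (chain R R' (R x x' a) (R' x x' a) m ω).1
                  * Real.exp (∑ i ∈ Finset.Icc 1 m,
                      V (chain R R' (R x x' a) (R' x x' a) i ω).1)) ω ∂P|
            ≤ C * Real.exp (⨆ y : X, V y) * supNorm f
                * supNorm (FKiter κ V (m - k - 1) (1 : X → ℝ))
                * FKiter κ V k (1 : X → ℝ) (R x x' a) * q ^ k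
                * dist (R x x' a) (R' x x' a) := hIH
          _ = D * FKiter κ V k (1 : X → ℝ) (R x x' a) * q ^ k
                * dist (R x x' a) (R' x x' a) := by rw [hDdef]
          _ ≤ D * FKiter κ V k (1 : X → ℝ) (R x x' a) * q ^ k * (q * dist x x') := by
              refine mul_le_mul_of_nonneg_left hda ?_
              exact mul_nonneg (mul_nonneg hD0 (FKiter_one_nonneg κ V k _)) (pow_nonneg hq0 k)
      · rw [hJdef, Set.indicator_of_notMem hb, Set.indicator_of_notMem hb, zero_mul,
          abs_zero]
    -- integrability of the dominating functions
    have hg0meas : Measurable fun b : Ω₀ => Real.exp (V (R x x' b))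
        * (D * FKiter κ V k (1 : X → ℝ) (R x x' b) * q ^ k * (q * dist x x')) := by
      have h1 : Measurable fun b : Ω₀ => Real.exp (V (R x x' b)) :=
        (Real.continuous_exp.comp hV).measurable.comp (measR R hRmeas x x')
      have h2 : Measurable fun b : Ω₀ => FKiter κ V k (1 : X → ℝ) (R x x' b) :=
        (hFKcont k).measurable.comp (measR R hRmeas x x')
      exact h1.mul (((measurable_const.mul h2).mul measurable_const).mul measurable_const)
    have hgbdd : ∀ b : Ω₀, |Real.exp (V (R x x' b))
        * (D * FKiter κ V k (1 : X → ℝ) (R x x' b) * q ^ k * (q * dist x x'))|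
        ≤ Real.exp (supNorm V)
          * (D * supNorm (FKiter κ V k (1 : X → ℝ)) * q ^ k * (q * dist x x')) := by
      intro b
      rw [abs_of_nonneg (hg0 b)]
      refine mul_le_mul (Real.exp_le_exp.2 (self_le_supNorm hV _)) ?_ ?_ (Real.exp_pos _).le
      · refine mul_le_mul_of_nonneg_right ?_ (mul_nonneg hq0 dist_nonneg)
        refine mul_le_mul_of_nonneg_right ?_ (pow_nonneg hq0 k)
        refine mul_le_mul_of_nonneg_left ?_ hD0
        exact self_le_supNorm (hFKcont k) _
      · refine mul_nonneg (mul_nonneg (mul_nonneg hD0 (FKiter_one_nonneg κ V k _))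
          (pow_nonneg hq0 k)) (mul_nonneg hq0 dist_nonneg)
    have hg0int : Integrable (fun b : Ω₀ => Real.exp (V (R x x' b))
        * (D * FKiter κ V k (1 : X → ℝ) (R x x' b) * q ^ k * (q * dist x x'))) P₀ :=
      my_integrable_of_bdd hg0meas.aestronglyMeasurable hgbdd
    have hJint : Integrable J P₀ := by
      rw [hJdef]
      exact hg0int.indicator hgoodmeas
    -- final computation
    calc |∫ a, Set.indicator good (fun b => Real.exp (V (R x x' b))) a
            * ∫ ω, (eventC R R' (R x x' a) (R' x x' a) q k).indicator
                (fun ω => f (chain R R' (R x x' a) (R' x x' a) m ω).1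
                  * Real.exp (∑ i ∈ Finset.Icc 1 m,
                      V (chain R R' (R x x' a) (R' x x' a) i ω).1)) ω ∂P ∂P₀|
        ≤ ∫ a, |Set.indicator good (fun b => Real.exp (V (R x x' b))) a
            * ∫ ω, (eventC R R' (R x x' a) (R' x x' a) q k).indicator
                (fun ω => f (chain R R' (R x x' a) (R' x x' a) m ω).1
                  * Real.exp (∑ i ∈ Finset.Icc 1 m,
                      V (chain R R' (R x x' a) (R' x x' a) i ω).1)) ω ∂P| ∂P₀ := by
          exact abs_integral_le_integral_abs_my _
      _ ≤ ∫ a, J a ∂P₀ :=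
          integral_mono_of_nonneg (ae_of_all _ (fun a => abs_nonneg _)) hJint
            (ae_of_all _ hptbd)
      _ ≤ ∫ a, Real.exp (V (R x x' a))
            * (D * FKiter κ V k (1 : X → ℝ) (R x x' a) * q ^ k * (q * dist x x')) ∂P₀ := by
          refine integral_mono_of_nonneg (ae_of_all _ (fun a => ?_)) hg0int
            (ae_of_all _ (fun a => ?_))
          · rw [hJdef]
            exact Set.indicator_nonneg (fun b _ => hg0 b) a
          · rw [hJdef]
            exact Set.indicator_le_self' (fun b _ => hg0 b) a
      _ = (D * q ^ k * (q * dist x x')) * ∫ a, Real.exp (V (R x x' a))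
            * FKiter κ V k (1 : X → ℝ) (R x x' a) ∂P₀ := by
          rw [← integral_const_mul]
          refine integral_congr_ae (ae_of_all _ (fun a => ?_))
          ring
      _ = (D * q ^ k * (q * dist x x')) * FKiter κ V (k + 1) (1 : X → ℝ) x := by
          rw [FK_eq_integral_R κ hFeller P₀ R hRmeas hRlaw V hV (hFKcont k) x x']
          rfl
      _ ≤ C * Real.exp (⨆ y : X, V y) * supNorm f
            * supNorm (FKiter κ V (m + 1 - (k + 1) - 1) (1 : X → ℝ))
            * FKiter κ V (k + 1) (1 : X → ℝ) x * q ^ (k + 1) * dist x x' := by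
          have h1 : m + 1 - (k + 1) - 1 = m - k - 1 := by omega
          rw [h1, hDdef]
          refine le_of_eq ?_
          rw [pow_succ]
          ring

end Main

/-- Bad-event estimate for the Feynman–Kac semigroup along the coupled
chain: `|E[1_{C_k}·f(x_n)·e^{V(x_1)+⋯+V(x_n)}]| ≤
C·e^{sup V}·‖f‖_∞·‖Q_{n−k−1}^V 1‖_∞·‖Q_k^V 1‖_∞·q^k·d(x,x')`. -/
theorem bad_event_FK_estimate
    {X : Type*} [MetricSpace X] [CompactSpace X] [MeasurableSpace X] [BorelSpace X]
    (κ : X → Measure X) (hκmeas : Measurable κ)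
    (hκprob : ∀ x, IsProbabilityMeasure (κ x))
    (hFeller : ∀ f : X → ℝ, Continuous f → Continuous fun x => ∫ y, f y ∂(κ x))
    {Ω₀ : Type*} [MeasurableSpace Ω₀] (P₀ : Measure Ω₀) [IsProbabilityMeasure P₀]
    (q : ℝ) (hq0 : 0 ≤ q) (hq1 : q < 1) (C : ℝ) (hC : 0 < C)
    (R R' : X → X → Ω₀ → X)
    (hRmeas : Measurable fun p : (X × X) × Ω₀ => R p.1.1 p.1.2 p.2)
    (hR'meas : Measurable fun p : (X × X) × Ω₀ => R' p.1.1 p.1.2 p.2)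
    (hRlaw : ∀ x x' : X, Measure.map (R x x') P₀ = κ x)
    (hR'law : ∀ x x' : X, Measure.map (R' x x') P₀ = κ x')
    (hcouple : ∀ x x' : X,
      P₀ {ω | q * dist x x' < dist (R x x' ω) (R' x x' ω)} ≤ ENNReal.ofReal (C * dist x x'))
    -- `P` is the countable product measure `P₀^{⊗ℕ}` on `Ω = Ω₀^ℕ`
    (P : Measure (ℕ → Ω₀)) [IsProbabilityMeasure P]
    (hP : ∀ n : ℕ, Measure.map (fun ω (i : Fin n) => ω i) P = Measure.pi fun _ : Fin n => P₀)
    (V : X → ℝ) (hV : Continuous V)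
    (x x' : X) (f : X → ℝ) (hf : Continuous f)
    (n : ℕ) (hn : 1 ≤ n) (k : ℕ) (hk : k ≤ n - 1) :
    |∫ ω in eventC R R' x x' q k,
        f (chain R R' x x' n ω).1
          * Real.exp (∑ i ∈ Finset.Icc 1 n, V (chain R R' x x' i ω).1) ∂P|
      ≤ C * Real.exp (⨆ y : X, V y) * supNorm f * supNorm (FKiter κ V (n - k - 1) 1)
          * supNorm (FKiter κ V k 1) * q ^ k * dist x x' := by
  haveI : Nonempty X := ⟨x⟩
  have hk1 : k + 1 ≤ n := by omega
  have hmeasC : MeasurableSet (eventC R R' x x' q k) :=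
    measurableSet_eventC R R' q hRmeas hR'meas x x' k
  rw [← integral_indicator hmeasC]
  have hmain := main_ind κ hκprob hFeller P₀ R R' hRmeas hR'meas hRlaw P hP V hV hf
    q hq0 C hC hcouple k n x x' hk1
  refine hmain.trans ?_
  have h1 : FKiter κ V k (1 : X → ℝ) x ≤ supNorm (FKiter κ V k (1 : X → ℝ)) :=
    self_le_supNorm (FKiter_cont κ hFeller V hV k continuous_const) x
  have hA : 0 ≤ C * Real.exp (⨆ y : X, V y) * supNorm f
      * supNorm (FKiter κ V (n - k - 1) (1 : X → ℝ)) := by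
    refine mul_nonneg (mul_nonneg (mul_nonneg hC.le (Real.exp_pos _).le)
      (supNorm_nonneg hf)) (supNorm_nonneg (FKiter_cont κ hFeller V hV _ continuous_const))
  have h2 := mul_le_mul_of_nonneg_right (mul_le_mul_of_nonneg_right
    (mul_le_mul_of_nonneg_left h1 hA) (pow_nonneg hq0 k)) (dist_nonneg (x := x) (y := x'))
  calc C * Real.exp (⨆ y : X, V y) * supNorm f * supNorm (FKiter κ V (n - k - 1) 1)
        * FKiter κ V k 1 x * q ^ k * dist x x'
      ≤ C * Real.exp (⨆ y : X, V y) * supNorm f * supNorm (FKiter κ V (n - k - 1) 1)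
        * supNorm (FKiter κ V k 1) * q ^ k * dist x x' := h2
    _ = _ := rfl
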